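/- For two agents with additive scaled utilities over mixed goods, the price of EFM (and of EFXM) is at most 3/2: there always exists an EFXM allocation with social welfare at least 2/3 of the optimal social welfare. -/
import Mathlib


open Finset

def mval {G H : Type*} (uI : G → ℝ) (uD : H → ℝ) (D : Finset H)
    (B : Finset G × (H → ℝ)) : ℝ :=
  (∑ g ∈ B.1, uI g) + ∑ h ∈ D, B.2 h * uD h

def OnlyIndiv {G H : Type*} (D : Finset H) (B : Finset G × (H → ℝ)) : Prop :=
  ∀ h ∈ D, B.2 h = 0

def EFXMpair {G H : Type*} [DecidableEq G] (uI : G → ℝ) (uD : H → ℝ) (D : Finset H)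
    (Bi Bj : Finset G × (H → ℝ)) : Prop :=
  (OnlyIndiv D Bj →
    (mval uI uD D Bj ≤ mval uI uD D Bi ∨
      ∀ g ∈ Bj.1, mval uI uD D (Bj.1.erase g, Bj.2) ≤ mval uI uD D Bi)) ∧
  (¬ OnlyIndiv D Bj → mval uI uD D Bj ≤ mval uI uD D Bi)

def Feasible2 {G H : Type*} (M : Finset G) (D : Finset H)
    (A1 A2 : Finset G × (H → ℝ)) : Prop :=
  A1.1 ⊆ M ∧ A2.1 ⊆ M ∧ Disjoint A1.1 A2.1 ∧
  (∀ h ∈ D, 0 ≤ A1.2 h) ∧ (∀ h ∈ D, 0 ≤ A2.2 h) ∧ (∀ h ∈ D, A1.2 h + A2.2 h ≤ 1)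

/-- If one fully does not envy, the EFXM pair condition holds. -/
lemma efxm_of_ef {G H : Type*} [DecidableEq G] {uI : G → ℝ} {uD : H → ℝ} {D : Finset H}
    {Bi Bj : Finset G × (H → ℝ)} (h : mval uI uD D Bj ≤ mval uI uD D Bi) :
    EFXMpair uI uD D Bi Bj :=
  ⟨fun _ => Or.inl h, fun _ => h⟩

lemma mval_pair {G H : Type*} (uI : G → ℝ) (uD : H → ℝ) (D : Finset H)
    (X : Finset G) (c : ℝ) :
    mval uI uD D (X, fun _ => c) = (∑ g ∈ X, uI g) + c * ∑ h ∈ D, uD h := by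
  simp [mval, Finset.mul_sum]

lemma feasible2_symm {G H : Type*} {M : Finset G} {D : Finset H}
    {A1 A2 : Finset G × (H → ℝ)} (h : Feasible2 M D A1 A2) : Feasible2 M D A2 A1 := by
  obtain ⟨a, b, c, d, e, f⟩ := h
  exact ⟨b, a, c.symm, e, d, fun h hh => by linarith [f h hh]⟩

/-- Social welfare of any feasible allocation is at most the sum of pointwise
dominating values. -/
lemma sw_le_W {G H : Type*} [DecidableEq G] (M : Finset G) (D : Finset H)
    (uI1 uI2 : G → ℝ) (uD1 uD2 : H → ℝ) (v : G → ℝ) (w : H → ℝ)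
    (hv1 : ∀ g ∈ M, uI1 g ≤ v g) (hv2 : ∀ g ∈ M, uI2 g ≤ v g)
    (hw1 : ∀ h ∈ D, uD1 h ≤ w h) (hw2 : ∀ h ∈ D, uD2 h ≤ w h)
    (hv0 : ∀ g ∈ M, 0 ≤ v g) (hw0 : ∀ h ∈ D, 0 ≤ w h)
    (B1 B2 : Finset G × (H → ℝ)) (hF : Feasible2 M D B1 B2) :
    mval uI1 uD1 D B1 + mval uI2 uD2 D B2 ≤ (∑ g ∈ M, v g) + ∑ h ∈ D, w h := by
  obtain ⟨hB1, hB2, hdisj, hx1, hx2, hx12⟩ := hF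
  have e1 : mval uI1 uD1 D B1 ≤ ∑ g ∈ B1.1, v g + ∑ h ∈ D, B1.2 h * w h := by
    unfold mval
    exact add_le_add (Finset.sum_le_sum fun g hg => hv1 g (hB1 hg))
      (Finset.sum_le_sum fun h hh => mul_le_mul_of_nonneg_left (hw1 h hh) (hx1 h hh))
  have e2 : mval uI2 uD2 D B2 ≤ ∑ g ∈ B2.1, v g + ∑ h ∈ D, B2.2 h * w h := by
    unfold mval
    exact add_le_add (Finset.sum_le_sum fun g hg => hv2 g (hB2 hg))
      (Finset.sum_le_sum fun h hh => mul_le_mul_of_nonneg_left (hw2 h hh) (hx2 h hh))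
  have e3 : ∑ g ∈ B1.1, v g + ∑ g ∈ B2.1, v g ≤ ∑ g ∈ M, v g := by
    rw [← Finset.sum_union hdisj]
    exact Finset.sum_le_sum_of_subset_of_nonneg (Finset.union_subset hB1 hB2)
      (fun g hgM _ => hv0 g hgM)
  have e4 : ∑ h ∈ D, B1.2 h * w h + ∑ h ∈ D, B2.2 h * w h ≤ ∑ h ∈ D, w h := by
    rw [← Finset.sum_add_distrib]
    apply Finset.sum_le_sum
    intro h hh
    nlinarith [hx12 h hh, hw0 h hh, hx1 h hh, hx2 h hh]
  linarith

/-- Rigid case: the minimal subset of indivisible goods of value more than `1/2`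
is an EFX-feasible big side. -/
lemma rigid_lemma {G H : Type*} [DecidableEq G] (M : Finset G) (D : Finset H)
    (u : G → ℝ) (uD : H → ℝ)
    (hnn : ∀ g ∈ M, 0 ≤ u g) (hdnn : ∀ h ∈ D, 0 ≤ uD h)
    (hsum : ∑ g ∈ M, u g + ∑ h ∈ D, uD h = 1)
    (hrig : ∀ S ⊆ M, ¬(∑ g ∈ S, u g ≤ 1/2 ∧ 1/2 ≤ ∑ g ∈ S, u g + ∑ h ∈ D, uD h)) :
    ∃ X, X ⊆ M ∧ 1/2 < ∑ g ∈ X, u g ∧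
      (∀ S ⊆ M, 1/2 < ∑ g ∈ S, u g → ∑ g ∈ X, u g ≤ ∑ g ∈ S, u g) ∧
      ∀ g ∈ X, ∑ g' ∈ X.erase g, u g' ≤ 1 - ∑ g ∈ X, u g := by
  have hd : 0 ≤ ∑ h ∈ D, uD h := Finset.sum_nonneg hdnn
  have htM : 1/2 < ∑ g ∈ M, u g := by
    by_contra hcon
    push_neg at hcon
    exact hrig M le_rfl ⟨hcon, by linarith⟩
  classical
  set P := M.powerset.filter (fun S => 1/2 < ∑ g ∈ S, u g) with hP
  have hMP : M ∈ P := by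
    simp only [hP, Finset.mem_filter, Finset.mem_powerset]
    exact ⟨le_rfl, htM⟩
  obtain ⟨X0, hX0P, hX0min⟩ := P.exists_min_image (fun S => ∑ g ∈ S, u g) ⟨M, hMP⟩
  have hX0M : X0 ⊆ M := Finset.mem_powerset.mp (Finset.mem_filter.mp hX0P).1
  set X := X0.filter (fun g => u g ≠ 0) with hXdef
  have hXsum : ∑ g ∈ X, u g = ∑ g ∈ X0, u g := Finset.sum_filter_ne_zero X0
  have hXM : X ⊆ M := (Finset.filter_subset _ _).trans hX0M
  have ha : 1/2 < ∑ g ∈ X, u g := by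
    rw [hXsum]; exact (Finset.mem_filter.mp hX0P).2
  have hmin : ∀ S ⊆ M, 1/2 < ∑ g ∈ S, u g → ∑ g ∈ X, u g ≤ ∑ g ∈ S, u g := by
    intro S hSM hS
    rw [hXsum]
    exact hX0min S (Finset.mem_filter.mpr ⟨Finset.mem_powerset.mpr hSM, hS⟩)
  refine ⟨X, hXM, ha, hmin, ?_⟩
  intro g hgX
  have hgne : u g ≠ 0 := (Finset.mem_filter.mp hgX).2
  have hgpos : 0 < u g := lt_of_le_of_ne (hnn g (hXM hgX)) (Ne.symm hgne)
  have herase : ∑ g' ∈ X.erase g, u g' = ∑ g' ∈ X, u g' - u g := by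
    have := Finset.sum_erase_add X u hgX
    linarith
  have hS'M : X.erase g ⊆ M := (Finset.erase_subset _ _).trans hXM
  have h1 : ∑ g' ∈ X.erase g, u g' ≤ 1/2 := by
    by_contra hcon
    push_neg at hcon
    have := hmin _ hS'M hcon
    rw [herase] at this
    linarith
  have h2 : ∑ g' ∈ X.erase g, u g' + ∑ h ∈ D, uD h < 1/2 := by
    by_contra hcon
    push_neg at hcon
    exact hrig _ hS'M ⟨h1, hcon⟩
  have hcs : ∑ g' ∈ M \ X.erase g, u g' = ∑ g' ∈ M, u g' - ∑ g' ∈ X.erase g, u g' :=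
    Finset.sum_sdiff_eq_sub hS'M
  have h3 : 1/2 < ∑ g' ∈ M \ X.erase g, u g' := by
    by_contra hcon
    push_neg at hcon
    have h4 : ∑ g' ∈ M \ X.erase g, u g' + ∑ h ∈ D, uD h < 1/2 := by
      by_contra hcon2
      push_neg at hcon2
      exact hrig _ Finset.sdiff_subset ⟨hcon, hcon2⟩
    linarith
  have h5 := hmin _ Finset.sdiff_subset h3
  rw [hcs] at h5
  linarith

/-- Flexible divider: agent A can split everything into two halves worth exactly 1/2
to them; agent B then chooses, giving a fully envy-free allocation of welfare ≥ 1. -/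
lemma flex_alloc {G H : Type*} [DecidableEq G] (M : Finset G) (D : Finset H)
    (uA uB : G → ℝ) (uDA uDB : H → ℝ)
    (hdnnA : ∀ h ∈ D, 0 ≤ uDA h)
    (hsA : ∑ g ∈ M, uA g + ∑ h ∈ D, uDA h = 1)
    (hsB : ∑ g ∈ M, uB g + ∑ h ∈ D, uDB h = 1)
    (S : Finset G) (hSM : S ⊆ M) (hS1 : ∑ g ∈ S, uA g ≤ 1/2)
    (hS2 : 1/2 ≤ ∑ g ∈ S, uA g + ∑ h ∈ D, uDA h) :
    ∃ PA PB : Finset G × (H → ℝ), Feasible2 M D PA PB ∧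
      mval uA uDA D PB ≤ mval uA uDA D PA ∧
      mval uB uDB D PA ≤ mval uB uDB D PB ∧
      1 ≤ mval uA uDA D PA + mval uB uDB D PB := by
  classical
  have hd0 : 0 ≤ ∑ h ∈ D, uDA h := Finset.sum_nonneg hdnnA
  set c : ℝ := if hc : (∑ h ∈ D, uDA h) = 0 then 0
    else (1/2 - ∑ g ∈ S, uA g) / (∑ h ∈ D, uDA h) with hcdef
  have hc0 : 0 ≤ c := by
    rw [hcdef]; split_ifs with h
    · exact le_rfl
    · exact div_nonneg (by linarith) hd0
  have hc1 : c ≤ 1 := by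
    rw [hcdef]; split_ifs with h
    · exact zero_le_one
    · rw [div_le_one (lt_of_le_of_ne hd0 (Ne.symm h))]; linarith
  have hcd : c * ∑ h ∈ D, uDA h = 1/2 - ∑ g ∈ S, uA g := by
    rw [hcdef]; split_ifs with h
    · rw [h]; ring_nf; linarith
    · rw [div_mul_cancel₀]; exact h
  have hsd : ∑ g ∈ M \ S, uA g = ∑ g ∈ M, uA g - ∑ g ∈ S, uA g :=
    Finset.sum_sdiff_eq_sub hSM
  have hsdB : ∑ g ∈ M \ S, uB g = ∑ g ∈ M, uB g - ∑ g ∈ S, uB g :=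
    Finset.sum_sdiff_eq_sub hSM
  have hv1 : mval uA uDA D (S, fun _ => c) = 1/2 := by
    rw [mval_pair, hcd]; ring
  have hv2 : mval uA uDA D (M \ S, fun _ => 1 - c) = 1/2 := by
    rw [mval_pair, hsd]
    have : (1 - c) * ∑ h ∈ D, uDA h = ∑ h ∈ D, uDA h - (1/2 - ∑ g ∈ S, uA g) := by
      rw [sub_mul, hcd]; ring
    rw [this]; linarith
  have hvB : mval uB uDB D (S, fun _ => c) + mval uB uDB D (M \ S, fun _ => 1 - c) = 1 := by
    rw [mval_pair, mval_pair, hsdB]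
    have : c * (∑ h ∈ D, uDB h) + (1 - c) * (∑ h ∈ D, uDB h) = ∑ h ∈ D, uDB h := by ring
    linarith
  have hfeas : Feasible2 M D (S, fun _ => c) (M \ S, fun _ => 1 - c) :=
    ⟨hSM, Finset.sdiff_subset, Finset.disjoint_sdiff, fun _ _ => hc0,
      fun _ _ => by show (0:ℝ) ≤ 1 - c; linarith,
      fun _ _ => by show c + (1 - c) ≤ 1; norm_num⟩
  by_cases hpick : 1/2 ≤ mval uB uDB D (M \ S, fun _ => 1 - c)
  · exact ⟨(S, fun _ => c), (M \ S, fun _ => 1 - c), hfeas,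
      by rw [hv1, hv2], by linarith, by linarith⟩
  · push_neg at hpick
    exact ⟨(M \ S, fun _ => 1 - c), (S, fun _ => c), feasible2_symm hfeas,
      by rw [hv1, hv2], by linarith, by linarith⟩

/-- For two agents with additive scaled utilities over mixed goods, there
always exists an EFXM (hence EFM) allocation with social welfare at least `2/3` of the
optimal social welfare, so the price of EFM (and of EFXM) is at most `3/2`. -/
theorem stmt_9 {G H : Type*} [DecidableEq G] (M : Finset G) (D : Finset H)
    (uI1 uI2 : G → ℝ) (uD1 uD2 : H → ℝ)
    (h1 : ∀ g ∈ M, 0 ≤ uI1 g) (h2 : ∀ g ∈ M, 0 ≤ uI2 g)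
    (h3 : ∀ h ∈ D, 0 ≤ uD1 h) (h4 : ∀ h ∈ D, 0 ≤ uD2 h)
    (hs1 : ∑ g ∈ M, uI1 g + ∑ h ∈ D, uD1 h = 1)
    (hs2 : ∑ g ∈ M, uI2 g + ∑ h ∈ D, uD2 h = 1) :
    ∃ A1 A2 : Finset G × (H → ℝ), Feasible2 M D A1 A2 ∧
      EFXMpair uI1 uD1 D A1 A2 ∧ EFXMpair uI2 uD2 D A2 A1 ∧
      ∀ B1 B2 : Finset G × (H → ℝ), Feasible2 M D B1 B2 →
        mval uI1 uD1 D B1 + mval uI2 uD2 D B2 ≤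
          (3 / 2 : ℝ) * (mval uI1 uD1 D A1 + mval uI2 uD2 D A2) := by
  classical
  -- the pointwise dominating values
  set v : G → ℝ := fun g => if uI2 g ≤ uI1 g then uI1 g else uI2 g with hvdef
  set w : H → ℝ := fun h => if uD2 h ≤ uD1 h then uD1 h else uD2 h with hwdef
  have hv1 : ∀ g ∈ M, uI1 g ≤ v g := by
    intro g hg; simp only [hvdef]; split_ifs with h <;> linarith
  have hv2 : ∀ g ∈ M, uI2 g ≤ v g := by
    intro g hg; simp only [hvdef]; split_ifs with h <;> linarith
  have hw1 : ∀ h ∈ D, uD1 h ≤ w h := by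
    intro h hh; simp only [hwdef]; split_ifs with h' <;> linarith
  have hw2 : ∀ h ∈ D, uD2 h ≤ w h := by
    intro h hh; simp only [hwdef]; split_ifs with h' <;> linarith
  have hv0 : ∀ g ∈ M, 0 ≤ v g := fun g hg => le_trans (h1 g hg) (hv1 g hg)
  have hw0 : ∀ h ∈ D, 0 ≤ w h := fun h hh => le_trans (h3 h hh) (hw1 h hh)
  -- the welfare-maximizing allocation
  set S : Finset G := M.filter (fun g => uI2 g ≤ uI1 g) with hSdef
  set χ : H → ℝ := fun h => if uD2 h ≤ uD1 h then (1:ℝ) else 0 with hχdef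
  have hSM : S ⊆ M := Finset.filter_subset _ _
  have hχ0 : ∀ h, 0 ≤ χ h := by
    intro h; simp only [hχdef]; split_ifs <;> norm_num
  have hχ1 : ∀ h, χ h ≤ 1 := by
    intro h; simp only [hχdef]; split_ifs <;> norm_num
  have hsd1 : ∑ g ∈ M \ S, uI1 g = ∑ g ∈ M, uI1 g - ∑ g ∈ S, uI1 g :=
    Finset.sum_sdiff_eq_sub hSM
  have hsd2 : ∑ g ∈ M \ S, uI2 g = ∑ g ∈ M, uI2 g - ∑ g ∈ S, uI2 g :=
    Finset.sum_sdiff_eq_sub hSM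
  have hχsum1 : ∑ h ∈ D, χ h * uD1 h + ∑ h ∈ D, (1 - χ h) * uD1 h = ∑ h ∈ D, uD1 h := by
    rw [← Finset.sum_add_distrib]
    exact Finset.sum_congr rfl (fun h _ => by ring)
  have hχsum2 : ∑ h ∈ D, χ h * uD2 h + ∑ h ∈ D, (1 - χ h) * uD2 h = ∑ h ∈ D, uD2 h := by
    rw [← Finset.sum_add_distrib]
    exact Finset.sum_congr rfl (fun h _ => by ring)
  have m11 : mval uI1 uD1 D (S, χ) = ∑ g ∈ S, uI1 g + ∑ h ∈ D, χ h * uD1 h := rfl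
  have m12 : mval uI1 uD1 D (M \ S, fun h => 1 - χ h)
      = ∑ g ∈ M \ S, uI1 g + ∑ h ∈ D, (1 - χ h) * uD1 h := rfl
  have m21 : mval uI2 uD2 D (S, χ) = ∑ g ∈ S, uI2 g + ∑ h ∈ D, χ h * uD2 h := rfl
  have m22 : mval uI2 uD2 D (M \ S, fun h => 1 - χ h)
      = ∑ g ∈ M \ S, uI2 g + ∑ h ∈ D, (1 - χ h) * uD2 h := rfl
  have I1 : mval uI1 uD1 D (S, χ) + mval uI1 uD1 D (M \ S, fun h => 1 - χ h) = 1 := by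
    rw [m11, m12, hsd1]; linarith
  have I2 : mval uI2 uD2 D (S, χ) + mval uI2 uD2 D (M \ S, fun h => 1 - χ h) = 1 := by
    rw [m21, m22, hsd2]; linarith
  have nn1 : 0 ≤ mval uI1 uD1 D (S, χ) := by
    rw [m11]
    have a : 0 ≤ ∑ g ∈ S, uI1 g := Finset.sum_nonneg (fun g hg => h1 g (hSM hg))
    have b : 0 ≤ ∑ h ∈ D, χ h * uD1 h :=
      Finset.sum_nonneg (fun h hh => mul_nonneg (hχ0 h) (h3 h hh))
    linarith
  have nn2 : 0 ≤ mval uI2 uD2 D (S, χ) := by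
    rw [m21]
    have a : 0 ≤ ∑ g ∈ S, uI2 g := Finset.sum_nonneg (fun g hg => h2 g (hSM hg))
    have b : 0 ≤ ∑ h ∈ D, χ h * uD2 h :=
      Finset.sum_nonneg (fun h hh => mul_nonneg (hχ0 h) (h4 h hh))
    linarith
  have nn1' : 0 ≤ mval uI1 uD1 D (M \ S, fun h => 1 - χ h) := by
    rw [m12]
    have a : 0 ≤ ∑ g ∈ M \ S, uI1 g :=
      Finset.sum_nonneg (fun g hg => h1 g (Finset.sdiff_subset hg))
    have b : 0 ≤ ∑ h ∈ D, (1 - χ h) * uD1 h :=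
      Finset.sum_nonneg (fun h hh => mul_nonneg (by linarith [hχ1 h]) (h3 h hh))
    linarith
  -- welfare of the max allocation equals the dominating sum
  have IW : mval uI1 uD1 D (S, χ) + mval uI2 uD2 D (M \ S, fun h => 1 - χ h)
      = (∑ g ∈ M, v g) + ∑ h ∈ D, w h := by
    rw [m11, m22]
    have eM : ∑ g ∈ M, v g = ∑ g ∈ S, uI1 g + ∑ g ∈ M \ S, uI2 g := by
      simp only [hvdef]
      rw [Finset.sum_ite, ← Finset.filter_not]
    have eD : ∑ h ∈ D, w h = ∑ h ∈ D, χ h * uD1 h + ∑ h ∈ D, (1 - χ h) * uD2 h := by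
      rw [← Finset.sum_add_distrib]
      refine Finset.sum_congr rfl (fun h _ => ?_)
      simp only [hwdef, hχdef]
      split_ifs <;> ring
    rw [eM, eD]; ring
  by_cases hA : 1/2 ≤ mval uI1 uD1 D (S, χ)
      ∧ 1/2 ≤ mval uI2 uD2 D (M \ S, fun h => 1 - χ h)
  · -- Case A : the optimal allocation is envy-free
    refine ⟨(S, χ), (M \ S, fun h => 1 - χ h),
      ⟨hSM, Finset.sdiff_subset, Finset.disjoint_sdiff,
        fun h _ => hχ0 h, fun h _ => by show (0:ℝ) ≤ 1 - χ h; linarith [hχ1 h],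
        fun h _ => by show χ h + (1 - χ h) ≤ 1; norm_num⟩,
      efxm_of_ef (by linarith [I1, hA.1]), efxm_of_ef (by linarith [I2, hA.2]), ?_⟩
    intro B1 B2 hB
    have hup := sw_le_W M D uI1 uI2 uD1 uD2 v w hv1 hv2 hw1 hw2 hv0 hw0 B1 B2 hB
    rw [← IW] at hup
    linarith [hA.1, hA.2]
  · -- Case B : the optimum is at most 3/2
    have hW : (∑ g ∈ M, v g) + ∑ h ∈ D, w h ≤ 3/2 := by
      rw [← IW]
      by_cases hm1 : 1/2 ≤ mval uI1 uD1 D (S, χ)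
      · have := hA
        have hm2 : ¬ (1/2 ≤ mval uI2 uD2 D (M \ S, fun h => 1 - χ h)) :=
          fun hc => hA ⟨hm1, hc⟩
        push_neg at hm2
        linarith [I1, nn1']
      · push_neg at hm1
        linarith [I2, nn2]
    suffices key : ∃ A1 A2 : Finset G × (H → ℝ), Feasible2 M D A1 A2 ∧
        EFXMpair uI1 uD1 D A1 A2 ∧ EFXMpair uI2 uD2 D A2 A1 ∧
        1 ≤ mval uI1 uD1 D A1 + mval uI2 uD2 D A2 by
      obtain ⟨A1, A2, hF, hE1, hE2, hsw⟩ := key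
      refine ⟨A1, A2, hF, hE1, hE2, fun B1 B2 hB => ?_⟩
      have hup := sw_le_W M D uI1 uI2 uD1 uD2 v w hv1 hv2 hw1 hw2 hv0 hw0 B1 B2 hB
      linarith
    by_cases hflex1 : ∃ S', S' ⊆ M ∧ ∑ g ∈ S', uI1 g ≤ 1/2
        ∧ 1/2 ≤ ∑ g ∈ S', uI1 g + ∑ h ∈ D, uD1 h
    · obtain ⟨S', hS'M, ha, hb⟩ := hflex1
      obtain ⟨PA, PB, hF, hEA, hEB, hsw⟩ :=
        flex_alloc M D uI1 uI2 uD1 uD2 h3 hs1 hs2 S' hS'M ha hb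
      exact ⟨PA, PB, hF, efxm_of_ef hEA, efxm_of_ef hEB, hsw⟩
    by_cases hflex2 : ∃ S', S' ⊆ M ∧ ∑ g ∈ S', uI2 g ≤ 1/2
        ∧ 1/2 ≤ ∑ g ∈ S', uI2 g + ∑ h ∈ D, uD2 h
    · obtain ⟨S', hS'M, ha, hb⟩ := hflex2
      obtain ⟨PA, PB, hF, hEA, hEB, hsw⟩ :=
        flex_alloc M D uI2 uI1 uD2 uD1 h4 hs2 hs1 S' hS'M ha hb
      exact ⟨PB, PA, feasible2_symm hF, efxm_of_ef hEB, efxm_of_ef hEA, by linarith⟩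
    -- both agents rigid
    have hrig1 : ∀ S' ⊆ M, ¬(∑ g ∈ S', uI1 g ≤ 1/2
        ∧ 1/2 ≤ ∑ g ∈ S', uI1 g + ∑ h ∈ D, uD1 h) :=
      fun S' hS' hc => hflex1 ⟨S', hS', hc.1, hc.2⟩
    have hrig2 : ∀ S' ⊆ M, ¬(∑ g ∈ S', uI2 g ≤ 1/2
        ∧ 1/2 ≤ ∑ g ∈ S', uI2 g + ∑ h ∈ D, uD2 h) :=
      fun S' hS' hc => hflex2 ⟨S', hS', hc.1, hc.2⟩
    obtain ⟨X1, hX1M, ha1, hmin1, hefx1⟩ := rigid_lemma M D uI1 uD1 h1 h3 hs1 hrig1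
    obtain ⟨X2, hX2M, ha2, hmin2, hefx2⟩ := rigid_lemma M D uI2 uD2 h2 h4 hs2 hrig2
    have c11 : mval uI1 uD1 D (X1, fun _ => (0:ℝ)) = ∑ g ∈ X1, uI1 g := by
      rw [mval_pair]; ring
    have c12 : mval uI1 uD1 D (M \ X1, fun _ => (1:ℝ)) = 1 - ∑ g ∈ X1, uI1 g := by
      rw [mval_pair, Finset.sum_sdiff_eq_sub hX1M]; linarith
    have c21 : mval uI2 uD2 D (X1, fun _ => (0:ℝ)) = ∑ g ∈ X1, uI2 g := by
      rw [mval_pair]; ring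
    have c22 : mval uI2 uD2 D (M \ X1, fun _ => (1:ℝ)) = 1 - ∑ g ∈ X1, uI2 g := by
      rw [mval_pair, Finset.sum_sdiff_eq_sub hX1M]; linarith
    have d11 : mval uI1 uD1 D (X2, fun _ => (0:ℝ)) = ∑ g ∈ X2, uI1 g := by
      rw [mval_pair]; ring
    have d12 : mval uI1 uD1 D (M \ X2, fun _ => (1:ℝ)) = 1 - ∑ g ∈ X2, uI1 g := by
      rw [mval_pair, Finset.sum_sdiff_eq_sub hX2M]; linarith
    have d21 : mval uI2 uD2 D (X2, fun _ => (0:ℝ)) = ∑ g ∈ X2, uI2 g := by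
      rw [mval_pair]; ring
    have d22 : mval uI2 uD2 D (M \ X2, fun _ => (1:ℝ)) = 1 - ∑ g ∈ X2, uI2 g := by
      rw [mval_pair, Finset.sum_sdiff_eq_sub hX2M]; linarith
    have feas1 : Feasible2 M D (X1, fun _ => (0:ℝ)) (M \ X1, fun _ => (1:ℝ)) :=
      ⟨hX1M, Finset.sdiff_subset, Finset.disjoint_sdiff,
        fun _ _ => le_rfl, fun _ _ => zero_le_one,
        fun _ _ => by show (0:ℝ) + 1 ≤ 1; norm_num⟩
    have feas2 : Feasible2 M D (X2, fun _ => (0:ℝ)) (M \ X2, fun _ => (1:ℝ)) :=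
      ⟨hX2M, Finset.sdiff_subset, Finset.disjoint_sdiff,
        fun _ _ => le_rfl, fun _ _ => zero_le_one,
        fun _ _ => by show (0:ℝ) + 1 ≤ 1; norm_num⟩
    by_cases hb1 : 1/2 ≤ mval uI2 uD2 D (M \ X1, fun _ => (1:ℝ))
    · exact ⟨(X1, fun _ => (0:ℝ)), (M \ X1, fun _ => (1:ℝ)), feas1,
        efxm_of_ef (by rw [c11, c12]; linarith),
        efxm_of_ef (by rw [c21]; linarith [c22]),
        by rw [c11]; linarith⟩
    by_cases hb2 : 1/2 ≤ mval uI1 uD1 D (M \ X2, fun _ => (1:ℝ))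
    · refine ⟨(M \ X2, fun _ => (1:ℝ)), (X2, fun _ => (0:ℝ)), feasible2_symm feas2,
        efxm_of_ef (by rw [d11]; linarith [d12]),
        efxm_of_ef (by rw [d21, d22]; linarith), ?_⟩
      rw [d21]; linarith
    push_neg at hb1 hb2
    have hf2X1 : 1/2 < ∑ g ∈ X1, uI2 g := by linarith [c22]
    have hf1X2 : 1/2 < ∑ g ∈ X2, uI1 g := by linarith [d12]
    have hA2le := hmin2 X1 hX1M hf2X1
    have hA1le := hmin1 X2 hX2M hf1X2
    by_cases hcmp : ∑ g ∈ X1, uI1 g ≤ ∑ g ∈ X2, uI2 g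
    · -- give the big side X1 to agent 2
      refine ⟨(M \ X1, fun _ => (1:ℝ)), (X1, fun _ => (0:ℝ)), feasible2_symm feas1,
        ⟨?_, ?_⟩, efxm_of_ef (by rw [c22, c21]; linarith), ?_⟩
      · intro _; right; intro g hg
        show mval uI1 uD1 D (X1.erase g, fun _ => (0:ℝ)) ≤ _
        rw [mval_pair, c12]
        have := hefx1 g hg
        linarith
      · intro hno; exact absurd (fun h _ => rfl) hno
      · rw [c12, c21]; linarith
    · -- give the big side X2 to agent 1
      push_neg at hcmp
      refine ⟨(X2, fun _ => (0:ℝ)), (M \ X2, fun _ => (1:ℝ)), feas2,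
        efxm_of_ef (by rw [d12, d11]; linarith), ⟨?_, ?_⟩, ?_⟩
      · intro _; right; intro g hg
        show mval uI2 uD2 D (X2.erase g, fun _ => (0:ℝ)) ≤ _
        rw [mval_pair, d22]
        have := hefx2 g hg
        linarith
      · intro hno; exact absurd (fun h _ => rfl) hno
      · rw [d11, d22]; linarith
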